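/- Assume φ : A → ℝ takes only nonnegative values and φ⁻¹({0}) ≠ ∅. Then φ is conserved by F if and only if for every shift-invariant Borel probability measure μ on A^{ℤ^D}, ∫ φ(a(0)) dμ(a) = ∫ φ(F(a)(0)) dμ(a). -/

import Mathlib

open MeasureTheory
open scoped ENNReal Topology

/-- The cellular automaton induced by a local rule `f` on neighbourhood `B`. -/
def induce {X A : Type*} [AddCommGroup X] (B : Finset X) (f : (B → A) → A)
    (a : X → A) : X → A :=
  fun x => f fun b => a (x + b.1)

/-- `ψ` is conserved by the CA induced by `f` on `B`. -/
def conserved {X A Z : Type*} [AddCommGroup X] [AddCommMonoid Z] (B : Finset X)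
    (f : (B → A) → A) (ψ : A → Z) : Prop :=
  (∃ a : A, ψ a = 0) ∧
  (∀ a : X → A, (Function.support fun x => ψ (a x)).Finite →
      (Function.support fun x => ψ (induce B f a x)).Finite) ∧
  (∀ a : X → A, (Function.support fun x => ψ (a x)).Finite →
      ∑ᶠ x, ψ (induce B f a x) = ∑ᶠ x, ψ (a x))

lemma map_finset_sum_meas {α β ι : Type*} [MeasurableSpace α] [MeasurableSpace β]
    {f : α → β} (hf : Measurable f) (s : Finset ι) (μ : ι → Measure α) :
    (∑ i ∈ s, μ i).map f = ∑ i ∈ s, (μ i).map f := by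
  classical
  induction s using Finset.induction with
  | empty => simp [Measure.map_zero]
  | insert _ _ h ih => rw [Finset.sum_insert h, Finset.sum_insert h, Measure.map_add _ _ hf, ih]

section
variable {A : Type*} [Fintype A] [Nonempty A] [MeasurableSpace A] [DiscreteMeasurableSpace A]
  {D : ℕ}

/-- The crisp combinatorial consequence of the integral hypothesis. -/
theorem key (B : Finset (Fin D → ℤ)) (f : (B → A) → A) (φ : A → ℝ)
    (H : ∀ μ : Measure ((Fin D → ℤ) → A), IsProbabilityMeasure μ →
        (∀ x : Fin D → ℤ, Measure.map (fun a y => a (y + x)) μ = μ) →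
        ∫ a, φ (a 0) ∂μ = ∫ a, φ (induce B f a 0) ∂μ)
    (n : ℕ) [NeZero n] (pat : (Fin D → ZMod n) → A) :
    ∑ t : Fin D → ZMod n, φ (pat t)
      = ∑ t : Fin D → ZMod n, φ (f fun b => pat (fun i => (b.1 i : ZMod n) + t i)) := by
  classical
  set ρ : (Fin D → ℤ) → (Fin D → ZMod n) := fun x i => (x i : ZMod n) with hρ
  set cfg : (Fin D → ZMod n) → (Fin D → ℤ) → A := fun t x => pat (ρ x + t) with hcfg
  set μ : Measure ((Fin D → ℤ) → A) :=
    ((Fintype.card (Fin D → ZMod n) : ℝ≥0∞))⁻¹ • ∑ t : Fin D → ZMod n, Measure.dirac (cfg t)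
    with hμ
  have hcard0 : (Fintype.card (Fin D → ZMod n) : ℝ≥0∞) ≠ 0 :=
    Nat.cast_ne_zero.mpr Fintype.card_ne_zero
  have hcardtop : (Fintype.card (Fin D → ZMod n) : ℝ≥0∞) ≠ ⊤ := by simp
  have hprob : IsProbabilityMeasure μ := by
    constructor
    rw [hμ]
    simp only [Measure.smul_apply, Measure.coe_finset_sum, Finset.sum_apply,
      Measure.dirac_apply_of_mem (Set.mem_univ _), smul_eq_mul]
    rw [Finset.sum_const, Finset.card_univ, nsmul_eq_mul, mul_one,
      ENNReal.inv_mul_cancel hcard0 hcardtop]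
  have hcfgshift : ∀ (y : Fin D → ℤ) (t : Fin D → ZMod n),
      (fun z => cfg t (z + y)) = cfg (ρ y + t) := by
    intro y t
    funext x
    simp only [hcfg]
    congr 1
    funext i
    simp only [hρ, Pi.add_apply]
    push_cast
    ring
  have hinv : ∀ y : Fin D → ℤ, Measure.map (fun a z => a (z + y)) μ = μ := by
    intro y
    have hσ : Measurable fun (a : (Fin D → ℤ) → A) z => a (z + y) :=
      measurable_pi_lambda _ fun z => measurable_pi_apply _
    rw [hμ, Measure.map_smul, map_finset_sum_meas hσ]
    congr 1
    have : ∀ t : Fin D → ZMod n,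
        (Measure.dirac (cfg t)).map (fun a z => a (z + y)) = Measure.dirac (cfg (ρ y + t)) := by
      intro t
      rw [Measure.map_dirac' hσ]
      congr 1
      exact hcfgshift y t
    simp only [this]
    exact Fintype.sum_equiv (Equiv.addLeft (ρ y)) _ _ (fun t => rfl)
  have hintg : ∀ (g : ((Fin D → ℤ) → A) → ℝ) (c : (Fin D → ℤ) → A),
      Integrable g (Measure.dirac c) := by
    intro g c
    refine (integrable_const (g c)).congr ?_
    rw [Filter.EventuallyEq, ae_dirac_eq]
    exact Filter.eventually_pure.2 rfl
  have hint : ∀ g : ((Fin D → ℤ) → A) → ℝ,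
      ∫ a, g a ∂μ = (Fintype.card (Fin D → ZMod n) : ℝ)⁻¹ * ∑ t, g (cfg t) := by
    intro g
    rw [hμ, integral_smul_measure, integral_finset_sum_measure (fun t _ => hintg g (cfg t))]
    simp only [integral_dirac, ENNReal.toReal_inv, ENNReal.toReal_natCast, smul_eq_mul]
  have := H μ hprob hinv
  rw [hint, hint] at this
  have hne : (Fintype.card (Fin D → ZMod n) : ℝ)⁻¹ ≠ 0 :=
    inv_ne_zero (Nat.cast_ne_zero.mpr Fintype.card_ne_zero)
  have h2 := mul_left_cancel₀ hne this
  calc ∑ t : Fin D → ZMod n, φ (pat t) = ∑ t, φ (cfg t 0) := by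
        apply Finset.sum_congr rfl
        intro t _
        have : ρ (0 : Fin D → ℤ) + t = t := by
          funext i
          show ((0:ℤ) : ZMod n) + t i = t i
          simp
        simp only [hcfg]
        rw [this]
    _ = ∑ t, φ (induce B f (cfg t) 0) := h2
    _ = ∑ t : Fin D → ZMod n, φ (f fun b => pat (fun i => (b.1 i : ZMod n) + t i)) := by
        apply Finset.sum_congr rfl
        intro t _
        congr 1
        simp only [induce, hcfg]
        congr 1
        funext b
        congr 1
        funext i
        simp [hρ]

end

section
variable {A : Type*} [Fintype A] [Nonempty A] [MeasurableSpace A] [DiscreteMeasurableSpace A]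
  {D : ℕ}

lemma sprop (n m : ℕ) (hn : n = 2*m+1) (z : ℤ) (hz : z.natAbs ≤ m) :
    (if ((z : ZMod n).val : ℤ) ≤ m then ((z : ZMod n).val : ℤ)
      else ((z : ZMod n).val : ℤ) - n) = z := by
  haveI : NeZero n := ⟨by omega⟩
  have hv : ((z : ZMod n).val : ℤ) = z % n := ZMod.val_intCast z
  rcases le_or_gt 0 z with h0 | h0
  · have : z % n = z := Int.emod_eq_of_lt h0 (by omega)
    rw [hv, this, if_pos (by omega)]
  · have h1 : z % n = z + n := by
      have : (z + (n:ℤ) * 1) % (n:ℤ) = z % n := Int.add_mul_emod_self_left (a := z) (b := (n:ℤ)) (c := 1)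
      rw [mul_one] at this
      rw [← this, Int.emod_eq_of_lt (by omega) (by omega)]
    rw [hv, h1, if_neg (by omega)]
    omega

/-- Vacuum propagation: if the whole neighbourhood of `x₀` is vacuum, so is the image. -/
lemma vacprop (B : Finset (Fin D → ℤ)) (f : (B → A) → A) (φ : A → ℝ)
    (hpos : ∀ a : A, 0 ≤ φ a) (hvac : ∃ a : A, φ a = 0)
    (H : ∀ μ : Measure ((Fin D → ℤ) → A), IsProbabilityMeasure μ →
        (∀ x : Fin D → ℤ, Measure.map (fun a y => a (y + x)) μ = μ) →
        ∫ a, φ (a 0) ∂μ = ∫ a, φ (induce B f a 0) ∂μ)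
    (u : (Fin D → ℤ) → A) (x₀ : Fin D → ℤ)
    (hu : ∀ b ∈ B, φ (u (x₀ + b)) = 0) :
    φ (induce B f u x₀) = 0 := by
  classical
  obtain ⟨v, hv⟩ := hvac
  set c : (Fin D → ℤ) → A := fun y => if φ (u y) = 0 then u y else v with hc
  have hcvac : ∀ y, φ (c y) = 0 := by
    intro y
    by_cases h : φ (u y) = 0 <;> simp [hc, h, hv]
  have hcu : induce B f u x₀ = induce B f c x₀ := by
    unfold induce
    congr 1
    funext b
    simp [hc, hu b.1 b.2]
  rw [hcu]
  -- bound on B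
  obtain ⟨m, hmB⟩ : ∃ m : ℕ, ∀ b ∈ B, ∀ i, (b i).natAbs ≤ m := by
    refine ⟨B.sup fun b => Finset.univ.sup fun i => (b i).natAbs, ?_⟩
    intro b hb i
    refine le_trans (Finset.le_sup (f := fun j => (b j).natAbs) (Finset.mem_univ i)) ?_
    exact Finset.le_sup (f := fun b' => Finset.univ.sup fun j => (b' j).natAbs) hb
  set n : ℕ := 2*m+1 with hn
  haveI : NeZero n := ⟨by omega⟩
  set s' : ZMod n → ℤ := fun w => if ((w.val : ℤ)) ≤ m then (w.val : ℤ) else (w.val : ℤ) - n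
    with hs'
  set pat : (Fin D → ZMod n) → A := fun t => c (x₀ + fun i => s' (t i - (x₀ i : ZMod n)))
    with hpat
  have hkey := key B f φ H n pat
  have hzero : ∑ t : Fin D → ZMod n, φ (pat t) = 0 := by
    apply Finset.sum_eq_zero
    intro t _
    exact hcvac _
  rw [hzero] at hkey
  have hall := (Finset.sum_eq_zero_iff_of_nonneg (fun t _ => hpos _)).1 hkey.symm
  have := hall (fun i => (x₀ i : ZMod n)) (Finset.mem_univ _)
  have heq : induce B f c x₀
      = f fun b => pat fun i => ((b.1 i : ZMod n) + (x₀ i : ZMod n)) := by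
    unfold induce
    congr 1
    funext b
    rw [hpat]
    show c (x₀ + b.1)
      = c (x₀ + fun i => s' ((b.1 i : ZMod n) + (x₀ i : ZMod n) - (x₀ i : ZMod n)))
    congr 1
    funext i
    simp only [Pi.add_apply, add_sub_cancel_right]
    congr 1
    exact (sprop n m hn (b.1 i) (hmB b.1 b.2 i)).symm
  rw [heq]
  exact this

end

section
variable {A : Type*} [Fintype A] [Nonempty A] [MeasurableSpace A] [DiscreteMeasurableSpace A]
  {D : ℕ}

lemma finprop (B : Finset (Fin D → ℤ)) (f : (B → A) → A) (φ : A → ℝ)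
    (hpos : ∀ a : A, 0 ≤ φ a) (hvac : ∃ a : A, φ a = 0)
    (H : ∀ μ : Measure ((Fin D → ℤ) → A), IsProbabilityMeasure μ →
        (∀ x : Fin D → ℤ, Measure.map (fun a y => a (y + x)) μ = μ) →
        ∫ a, φ (a 0) ∂μ = ∫ a, φ (induce B f a 0) ∂μ)
    (a : (Fin D → ℤ) → A)
    (hfin : (Function.support fun x => φ (a x)).Finite) :
    (Function.support fun x => φ (induce B f a x)).Finite := by
  have hsub : (Function.support fun x => φ (induce B f a x)) ⊆
      ⋃ b ∈ B, (fun y => y - b) '' (Function.support fun x => φ (a x)) := by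
    intro x hx
    by_contra hmem
    refine hx (vacprop B f φ hpos hvac H a x ?_)
    intro b hb
    by_contra hnb
    exact hmem (Set.mem_biUnion hb ⟨x + b, hnb, by simp⟩)
  exact Set.Finite.subset (Set.Finite.biUnion B.finite_toSet fun b _ => hfin.image _) hsub

/-- Integer arithmetic: reduction of an out-of-middle coordinate lands outside the support box. -/
lemma wout (k₀ m : ℕ) (x b : ℤ) (hb : b.natAbs ≤ m)
    (hx1 : -((k₀:ℤ)+2*m) ≤ x) (hx2 : x ≤ (k₀:ℤ)+4*m)
    (hout : (k₀:ℤ)+m < x ∨ x < -((k₀:ℤ)+m)) :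
    (k₀ : ℤ) < ((x + b + ((k₀:ℤ)+2*m)) % (2*(k₀:ℤ)+6*m+1) - ((k₀:ℤ)+2*m)).natAbs := by
  set n : ℤ := 2*(k₀:ℤ)+6*m+1 with hn
  set w : ℤ := x + b + ((k₀:ℤ)+2*m) with hw
  rcases lt_trichotomy w 0 with h | h | h
  · have h1 : w % n = w + n := by
      have e : (w + n * 1) % n = w % n :=
        Int.add_mul_emod_self_left (a := w) (b := n) (c := 1)
      rw [mul_one] at e
      rw [← e, Int.emod_eq_of_lt (by omega) (by omega)]
    omega
  · have h1 : w % n = w := Int.emod_eq_of_lt (by omega) (by omega)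
    omega
  · rcases lt_or_ge w n with h2 | h2
    · have h1 : w % n = w := Int.emod_eq_of_lt (by omega) h2
      omega
    · have h1 : w % n = w - n := by
        have e : (w - n + n * 1) % n = (w - n) % n :=
          Int.add_mul_emod_self_left (a := w - n) (b := n) (c := 1)
        rw [mul_one, sub_add_cancel] at e
        rw [e, Int.emod_eq_of_lt (by omega) (by omega)]
      omega

end

section
variable {A : Type*} [Fintype A] [Nonempty A] [MeasurableSpace A] [DiscreteMeasurableSpace A]
  {D : ℕ}

lemma sumprop (B : Finset (Fin D → ℤ)) (f : (B → A) → A) (φ : A → ℝ)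
    (hpos : ∀ a : A, 0 ≤ φ a) (hvac : ∃ a : A, φ a = 0)
    (H : ∀ μ : Measure ((Fin D → ℤ) → A), IsProbabilityMeasure μ →
        (∀ x : Fin D → ℤ, Measure.map (fun a y => a (y + x)) μ = μ) →
        ∫ a, φ (a 0) ∂μ = ∫ a, φ (induce B f a 0) ∂μ)
    (a : (Fin D → ℤ) → A)
    (hfin : (Function.support fun x => φ (a x)).Finite) :
    ∑ᶠ x, φ (induce B f a x) = ∑ᶠ x, φ (a x) := by
  classical
  obtain ⟨m, hmB⟩ : ∃ m : ℕ, ∀ b ∈ B, ∀ i, (b i).natAbs ≤ m := by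
    refine ⟨B.sup fun b => Finset.univ.sup fun i => (b i).natAbs, ?_⟩
    intro b hb i
    refine le_trans (Finset.le_sup (f := fun j => (b j).natAbs) (Finset.mem_univ i)) ?_
    exact Finset.le_sup (f := fun b' => Finset.univ.sup fun j => (b' j).natAbs) hb
  obtain ⟨k₀, hk₀⟩ : ∃ k₀ : ℕ, ∀ x : Fin D → ℤ, φ (a x) ≠ 0 → ∀ i, (x i).natAbs ≤ k₀ := by
    refine ⟨hfin.toFinset.sup fun x => Finset.univ.sup fun i => (x i).natAbs, ?_⟩
    intro x hx i
    refine le_trans (Finset.le_sup (f := fun j => (x j).natAbs) (Finset.mem_univ i)) ?_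
    exact Finset.le_sup (f := fun x' => Finset.univ.sup fun j => (x' j).natAbs)
      (hfin.mem_toFinset.2 hx)
  set k : ℤ := (k₀:ℤ) + 2*m with hk
  set n : ℕ := 2*k₀ + 6*m + 1 with hn
  haveI : NeZero n := ⟨by omega⟩
  set box : Finset (Fin D → ℤ) := Finset.Icc (fun _ => -k) (fun _ => (k₀:ℤ)+4*m) with hbox
  set mid : Finset (Fin D → ℤ) := Finset.Icc (fun _ => -((k₀:ℤ)+m)) (fun _ => (k₀:ℤ)+m)
    with hmid
  have hboxmem : ∀ x : Fin D → ℤ, x ∈ box ↔ ∀ i, -k ≤ x i ∧ x i ≤ (k₀:ℤ)+4*m := by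
    intro x
    rw [hbox, Finset.mem_Icc]
    constructor
    · exact fun ⟨h1, h2⟩ i => ⟨h1 i, h2 i⟩
    · exact fun h => ⟨fun i => (h i).1, fun i => (h i).2⟩
  have hmidmem : ∀ x : Fin D → ℤ, x ∈ mid ↔ ∀ i, -((k₀:ℤ)+m) ≤ x i ∧ x i ≤ (k₀:ℤ)+m := by
    intro x
    rw [hmid, Finset.mem_Icc]
    constructor
    · exact fun ⟨h1, h2⟩ i => ⟨h1 i, h2 i⟩
    · exact fun h => ⟨fun i => (h i).1, fun i => (h i).2⟩
  set W : (Fin D → ℤ) → (Fin D → ℤ) := fun x i => (x i + k) % n - k with hW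
  set pat : (Fin D → ZMod n) → A :=
    fun t => a fun i => (((t i + ((k : ZMod n))).val : ℤ) - k) with hpat
  -- F1
  have hF1 : ∀ x : Fin D → ℤ, pat (fun i => ((x i : ZMod n))) = a (W x) := by
    intro x
    show a (fun i => (((x i : ZMod n) + ((k : ZMod n))).val : ℤ) - k) = a (W x)
    congr 1
    funext i
    show (((x i : ZMod n) + ((k : ZMod n))).val : ℤ) - k = (x i + k) % n - k
    rw [← Int.cast_add, ZMod.val_intCast]
  have hWid : ∀ z : ℤ, -k ≤ z → z ≤ (k₀:ℤ)+4*m → (z + k) % (n:ℤ) - k = z := by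
    intro z h1 h2
    have : (z + k) % (n:ℤ) = z + k := Int.emod_eq_of_lt (by omega) (by omega)
    omega
  -- bijection between box and (Fin D → ZMod n)
  have sumbij : ∀ G : (Fin D → ZMod n) → ℝ,
      ∑ t, G t = ∑ x ∈ box, G (fun i => ((x i : ZMod n))) := by
    intro G
    have hsec : ∀ t : Fin D → ZMod n,
        (fun i => (((((t i + ((k : ZMod n))).val : ℤ) - k : ℤ)) : ZMod n)) = t := by
      intro t
      funext i
      push_cast
      rw [ZMod.natCast_val, ZMod.cast_id]
      ring
    refine (Finset.sum_nbij'
      (s := Finset.univ) (t := box) (g := fun x => G (fun i => ((x i : ZMod n)))) (f := G)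
      (i := fun (t : Fin D → ZMod n) => (fun i => (((t i + ((k : ZMod n))).val : ℤ) - k) : Fin D → ℤ))
      (j := fun (x : Fin D → ℤ) => (fun i => ((x i : ZMod n)) : Fin D → ZMod n))
      ?_ ?_ ?_ ?_ ?_)
    · intro t _
      rw [hboxmem]
      intro i
      show -k ≤ (((t i + ((k : ZMod n))).val : ℤ) - k)
        ∧ (((t i + ((k : ZMod n))).val : ℤ) - k) ≤ (k₀:ℤ)+4*m
      have h1 : ((t i + ((k : ZMod n))).val : ℤ) < n := by
        exact_mod_cast Int.ofNat_lt.mpr (ZMod.val_lt _)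
      have h2 : (0:ℤ) ≤ ((t i + ((k : ZMod n))).val : ℤ) := Int.ofNat_nonneg _
      omega
    · intro x _
      exact Finset.mem_univ _
    · intro t _
      exact hsec t
    · intro x hx
      funext i
      rw [hboxmem] at hx
      show (((x i : ZMod n) + ((k : ZMod n))).val : ℤ) - k = x i
      rw [← Int.cast_add, ZMod.val_intCast]
      have := hWid (x i) (hx i).1 (hx i).2
      omega
    · intro t _
      exact (congrArg G (hsec t)).symm
  -- LHS identification
  have hsuppbox : (Function.support fun x => φ (a x)) ⊆ ↑box := by
    intro x hx
    rw [Finset.mem_coe, hboxmem]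
    intro i
    have := hk₀ x hx i
    omega
  have lhs_eq : ∑ t, φ (pat t) = ∑ᶠ x, φ (a x) := by
    rw [sumbij fun t => φ (pat t)]
    rw [finsum_eq_sum_of_support_subset (fun x => φ (a x)) hsuppbox]
    apply Finset.sum_congr rfl
    intro x hx
    rw [hboxmem] at hx
    have hWx : W x = x := funext fun i => hWid (x i) (hx i).1 (hx i).2
    rw [hF1 x, hWx]
  -- RHS identification
  set at' : (Fin D → ℤ) → A := fun y => a (W y) with hat
  have hstep2 : ∀ x : Fin D → ℤ,
      (f fun b => pat fun i => ((b.1 i : ZMod n)) + ((x i : ZMod n)))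
        = induce B f at' x := by
    intro x
    unfold induce
    congr 1
    funext b
    have : (fun i => ((b.1 i : ZMod n)) + ((x i : ZMod n)))
        = fun i => (((x + b.1) i : ZMod n)) := by
      funext i
      rw [Pi.add_apply, Int.cast_add]
      ring
    rw [this, hF1 (x + b.1)]
  have hmidbox : mid ⊆ box := by
    intro x hx
    rw [hmidmem] at hx
    rw [hboxmem]
    intro i
    have := hx i
    omega
  -- vanishing on box \ mid for the periodized configuration
  have hvan : ∀ x ∈ box, x ∉ mid → φ (induce B f at' x) = 0 := by
    intro x hxbox hxmid
    apply vacprop B f φ hpos hvac H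
    intro b hb
    rw [hat]
    by_contra hne
    rw [hmidmem] at hxmid
    push_neg at hxmid
    obtain ⟨j, hj⟩ := hxmid
    rw [hboxmem] at hxbox
    have hWj := hk₀ _ hne j
    have hbj := hmB b hb j
    have hxj := hxbox j
    have hwout := wout k₀ m (x j) (b j) hbj (by omega) (by omega) (by omega)
    have hrw : W (x + b) j = (x j + b j + ((k₀:ℤ)+2*m)) % (2*(k₀:ℤ)+6*m+1) - ((k₀:ℤ)+2*m) := by
      show ((x + b) j + k) % (n:ℤ) - k = _
      rw [Pi.add_apply, hk, hn]
      push_cast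
      ring_nf
    rw [hrw] at hWj
    omega
  -- agreement on mid
  have hagree : ∀ x ∈ mid, induce B f at' x = induce B f a x := by
    intro x hx
    unfold induce
    congr 1
    funext b
    rw [hat]
    show a (W (x + b.1)) = a (x + b.1)
    congr 1
    funext i
    rw [hmidmem] at hx
    have h1 := hx i
    have h2 := hmB b.1 b.2 i
    exact hWid ((x + b.1) i) (by rw [Pi.add_apply]; omega) (by rw [Pi.add_apply]; omega)
  -- support of image inside mid
  have hsuppmid : (Function.support fun x => φ (induce B f a x)) ⊆ ↑mid := by
    intro x hx
    rw [Finset.mem_coe, hmidmem]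
    by_contra hc
    push_neg at hc
    obtain ⟨j, hj⟩ := hc
    refine hx (vacprop B f φ hpos hvac H a x ?_)
    intro b hb
    by_contra hne
    have h1 := hk₀ _ hne j
    have h2 := hmB b hb j
    rw [Pi.add_apply] at h1
    omega
  have rhs_eq : ∑ t : Fin D → ZMod n, φ (f fun b => pat fun i => ((b.1 i : ZMod n)) + t i)
      = ∑ᶠ x, φ (induce B f a x) := by
    rw [sumbij fun t => φ (f fun b => pat fun i => ((b.1 i : ZMod n)) + t i)]
    rw [finsum_eq_sum_of_support_subset (fun x => φ (induce B f a x)) hsuppmid]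
    calc ∑ x ∈ box, φ (f fun b => pat fun i => ((b.1 i : ZMod n)) + ((x i : ZMod n)))
        = ∑ x ∈ box, φ (induce B f at' x) :=
          Finset.sum_congr rfl fun x _ => congrArg φ (hstep2 x)
      _ = ∑ x ∈ mid, φ (induce B f at' x) := (Finset.sum_subset hmidbox hvan).symm
      _ = ∑ x ∈ mid, φ (induce B f a x) :=
          Finset.sum_congr rfl fun x hx => congrArg φ (hagree x hx)
  calc ∑ᶠ x, φ (induce B f a x)
      = ∑ t : Fin D → ZMod n, φ (f fun b => pat fun i => ((b.1 i : ZMod n)) + t i) := rhs_eq.symm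
    _ = ∑ t : Fin D → ZMod n, φ (pat t) := (key B f φ H n pat).symm
    _ = ∑ᶠ x, φ (a x) := lhs_eq

end


section
variable {A : Type*} [Fintype A] [Nonempty A] [MeasurableSpace A] [DiscreteMeasurableSpace A]
  {D : ℕ}

lemma forward (hD : 1 ≤ D) (B : Finset (Fin D → ℤ)) (f : (B → A) → A) (φ : A → ℝ)
    (hpos : ∀ a : A, 0 ≤ φ a) (hcons : conserved B f φ)
    (μ : Measure ((Fin D → ℤ) → A)) (hμp : IsProbabilityMeasure μ)
    (hμs : ∀ x : Fin D → ℤ, Measure.map (fun a y => a (y + x)) μ = μ) :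
    ∫ a, φ (a 0) ∂μ = ∫ a, φ (induce B f a 0) ∂μ := by
  classical
  obtain ⟨v, hv⟩ := hcons.1
  obtain ⟨m, hmB⟩ : ∃ m : ℕ, ∀ b ∈ B, ∀ i, (b i).natAbs ≤ m := by
    refine ⟨B.sup fun b => Finset.univ.sup fun i => (b i).natAbs, ?_⟩
    intro b hb i
    refine le_trans (Finset.le_sup (f := fun j => (b j).natAbs) (Finset.mem_univ i)) ?_
    exact Finset.le_sup (f := fun b' => Finset.univ.sup fun j => (b' j).natAbs) hb
  -- max of φ
  obtain ⟨M, hM⟩ : ∃ M : ℝ, ∀ a : A, φ a ≤ M := by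
    refine ⟨Finset.univ.sup' Finset.univ_nonempty φ, fun a => ?_⟩
    exact Finset.le_sup' φ (Finset.mem_univ a)
  -- the constant vacuum maps to vacuum
  have hconstw : φ (f fun _ => v) = 0 := by
    by_contra hne
    have hsupp := hcons.2.1 (fun _ => v) (by simp [hv, Function.support])
    have : (Function.support fun x : Fin D → ℤ => φ (induce B f (fun _ => v) x))
        = Set.univ := by
      ext x
      simpa [Function.support, induce] using hne
    rw [this, Set.finite_univ_iff] at hsupp
    haveI : Finite ℤ := Finite.of_injective (fun z => (fun _ => z : Fin D → ℤ))
      (fun a b h => congrFun h ⟨0, hD⟩)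
    exact not_finite ℤ
  -- boxes
  set C : ℕ → Finset (Fin D → ℤ) :=
    fun r => Finset.Icc (fun _ => -(r:ℤ)) (fun _ => (r:ℤ)) with hC
  have hCmem : ∀ (r : ℕ) (x : Fin D → ℤ), x ∈ C r ↔ ∀ i, -(r:ℤ) ≤ x i ∧ x i ≤ r := by
    intro r x
    rw [hC]
    show x ∈ Finset.Icc _ _ ↔ _
    rw [Finset.mem_Icc]
    constructor
    · exact fun ⟨h1, h2⟩ i => ⟨h1 i, h2 i⟩
    · exact fun h => ⟨fun i => (h i).1, fun i => (h i).2⟩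
  have hCsub : ∀ {r s : ℕ}, r ≤ s → C r ⊆ C s := by
    intro r s hrs x hx
    rw [hCmem] at hx ⊢
    intro i
    have := hx i
    omega
  have hCcard : ∀ r : ℕ, (C r).card = (2*r+1)^D := by
    intro r
    rw [hC]
    show (Finset.Icc _ _).card = _
    rw [Pi.card_Icc]
    have : ∀ i : Fin D, (Finset.Icc (-(r:ℤ)) (r:ℤ)).card = 2*r+1 := by
      intro _
      rw [Int.card_Icc]
      omega
    rw [Finset.prod_congr rfl fun i _ => this i, Finset.prod_const, Finset.card_univ,
      Fintype.card_fin]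
  -- measurability and integrability
  have hmeas1 : ∀ x : Fin D → ℤ, Measurable fun a : (Fin D → ℤ) → A => φ (a x) :=
    fun x => Measurable.of_discrete.comp (measurable_pi_apply x)
  have hmeas2 : ∀ x : Fin D → ℤ, Measurable fun a : (Fin D → ℤ) → A => φ (induce B f a x) := by
    intro x
    apply Measurable.of_discrete.comp (g := φ)
    exact Measurable.of_discrete.comp (measurable_pi_lambda _ fun b => measurable_pi_apply _)
  have hint1 : ∀ x : Fin D → ℤ, Integrable (fun a : (Fin D → ℤ) → A => φ (a x)) μ := by
    intro x
    refine (integrable_const M).mono' (hmeas1 x).aestronglyMeasurable ?_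
    exact Filter.Eventually.of_forall fun a => by
      rw [Real.norm_eq_abs, abs_of_nonneg (hpos _)]; exact hM _
  have hint2 : ∀ x : Fin D → ℤ, Integrable (fun a : (Fin D → ℤ) → A => φ (induce B f a x)) μ := by
    intro x
    refine (integrable_const M).mono' (hmeas2 x).aestronglyMeasurable ?_
    exact Filter.Eventually.of_forall fun a => by
      rw [Real.norm_eq_abs, abs_of_nonneg (hpos _)]; exact hM _
  -- shift invariance of the site integrals
  have hσmeas : ∀ x : Fin D → ℤ, Measurable fun (a : (Fin D → ℤ) → A) y => a (y + x) :=
    fun x => measurable_pi_lambda _ fun y => measurable_pi_apply _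
  have hshift1 : ∀ x : Fin D → ℤ, ∫ a, φ (a x) ∂μ = ∫ a, φ (a 0) ∂μ := by
    intro x
    conv_rhs => rw [← hμs x]
    rw [integral_map (hσmeas x).aemeasurable (hmeas1 0).aestronglyMeasurable]
    simp only [zero_add]
  have hshift2 : ∀ x : Fin D → ℤ,
      ∫ a, φ (induce B f a x) ∂μ = ∫ a, φ (induce B f a 0) ∂μ := by
    intro x
    conv_rhs => rw [← hμs x]
    rw [integral_map (hσmeas x).aemeasurable (hmeas2 0).aestronglyMeasurable]
    apply integral_congr_ae
    apply Filter.Eventually.of_forall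
    intro a
    show φ (induce B f a x) = φ (induce B f (fun y => a (y + x)) 0)
    congr 1
    unfold induce
    congr 1
    funext b
    rw [zero_add, add_comm]
  -- the key pointwise bound
  have hbound : ∀ (n : ℕ) (a : (Fin D → ℤ) → A),
      |∑ x ∈ C n, (φ (induce B f a x) - φ (a x))|
        ≤ M * ((C (n+3*m)).card - (C n).card : ℝ) := by
    intro n a
    set a' : (Fin D → ℤ) → A := fun y => if y ∈ C (n+2*m) then a y else v with ha'
    have ha'supp : (Function.support fun x => φ (a' x)) ⊆ ↑(C (n+2*m)) := by
      intro x hx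
      rw [Finset.mem_coe]
      by_contra hc
      apply hx
      show φ (a' x) = 0
      rw [ha']
      simp only [hc, if_false, hv]
    have ha'fin : (Function.support fun x => φ (a' x)).Finite :=
      Set.Finite.subset (C (n+2*m)).finite_toSet ha'supp
    have hFa'supp : (Function.support fun x => φ (induce B f a' x)) ⊆ ↑(C (n+3*m)) := by
      intro x hx
      rw [Finset.mem_coe]
      by_contra hc
      apply hx
      show φ (induce B f a' x) = 0
      have : induce B f a' x = f fun _ => v := by
        unfold induce
        congr 1
        funext b
        show (if (x + b.1) ∈ C (n+2*m) then a (x + b.1) else v) = v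
        rw [if_neg]
        intro hmem
        apply hc
        rw [hCmem] at hmem ⊢
        intro i
        have h1 := hmem i
        have h2 := hmB b.1 b.2 i
        rw [Pi.add_apply] at h1
        omega
      rw [this, hconstw]
    have hsum := hcons.2.2 a' ha'fin
    rw [finsum_eq_sum_of_support_subset _ hFa'supp,
      finsum_eq_sum_of_support_subset _ ha'supp] at hsum
    -- agreement on C n
    have hagree1 : ∀ x ∈ C n, φ (induce B f a x) = φ (induce B f a' x) := by
      intro x hx
      congr 1
      unfold induce
      congr 1
      funext b
      show a (x + b.1) = (if (x + b.1) ∈ C (n+2*m) then a (x + b.1) else v)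
      rw [if_pos]
      rw [hCmem] at hx ⊢
      intro i
      have h1 := hx i
      have h2 := hmB b.1 b.2 i
      rw [Pi.add_apply]
      omega
    have hagree2 : ∀ x ∈ C n, φ (a x) = φ (a' x) := by
      intro x hx
      show φ (a x) = φ (if x ∈ C (n+2*m) then a x else v)
      rw [if_pos (hCsub (r := n) (s := n + 2*m) (by omega) hx)]
    rw [Finset.sum_sub_distrib,
      Finset.sum_congr rfl hagree1, Finset.sum_congr rfl hagree2]
    -- bounds
    have hsub2 : C n ⊆ C (n+2*m) := hCsub (by omega)
    have hsub3 : C n ⊆ C (n+3*m) := hCsub (by omega)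
    have hsub23 : C (n+2*m) ⊆ C (n+3*m) := hCsub (by omega)
    have hP3 : ∑ x ∈ C n, φ (induce B f a' x) ≤ ∑ x ∈ C (n+3*m), φ (induce B f a' x) :=
      Finset.sum_le_sum_of_subset_of_nonneg hsub3 fun x _ _ => hpos _
    have hQ2 : ∑ x ∈ C n, φ (a' x) ≤ ∑ x ∈ C (n+2*m), φ (a' x) :=
      Finset.sum_le_sum_of_subset_of_nonneg hsub2 fun x _ _ => hpos _
    have hdiff3 : ∑ x ∈ C (n+3*m), φ (induce B f a' x)
        ≤ ∑ x ∈ C n, φ (induce B f a' x) + M * ((C (n+3*m)).card - (C n).card : ℝ) := by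
      rw [← Finset.sum_sdiff hsub3]
      have : ∑ x ∈ C (n+3*m) \ C n, φ (induce B f a' x)
          ≤ ((C (n+3*m) \ C n).card : ℝ) * M := by
        have h1 := Finset.sum_le_card_nsmul (C (n+3*m) \ C n)
          (fun x => φ (induce B f a' x)) M (fun x _ => hM _)
        rw [nsmul_eq_mul] at h1
        exact h1
      have hcard : ((C (n+3*m) \ C n).card : ℝ) = ((C (n+3*m)).card - (C n).card : ℝ) := by
        rw [Finset.card_sdiff_of_subset hsub3]
        have := Finset.card_le_card hsub3
        push_cast [Nat.cast_sub this]
        ring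
      rw [hcard] at this
      linarith [this]
    have hdiff2 : ∑ x ∈ C (n+2*m), φ (a' x)
        ≤ ∑ x ∈ C n, φ (a' x) + M * ((C (n+3*m)).card - (C n).card : ℝ) := by
      rw [← Finset.sum_sdiff hsub2]
      have h1 : ∑ x ∈ C (n+2*m) \ C n, φ (a' x)
          ≤ ((C (n+2*m) \ C n).card : ℝ) * M := by
        have h1 := Finset.sum_le_card_nsmul (C (n+2*m) \ C n)
          (fun x => φ (a' x)) M (fun x _ => hM _)
        rw [nsmul_eq_mul] at h1
        exact h1
      have h0M : (0:ℝ) ≤ M := le_trans (hpos v) (hM v)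
      have hc2 : ((C (n+2*m) \ C n).card : ℝ) ≤ ((C (n+3*m)).card - (C n).card : ℝ) := by
        rw [Finset.card_sdiff_of_subset hsub2]
        have h23 := Finset.card_le_card hsub23
        have hn2 := Finset.card_le_card hsub2
        push_cast [Nat.cast_sub hn2]
        have : ((C (n+2*m)).card : ℝ) ≤ ((C (n+3*m)).card : ℝ) := by exact_mod_cast h23
        linarith
      have := le_trans h1 (by nlinarith [h0M] : ((C (n+2*m) \ C n).card : ℝ) * M
        ≤ M * ((C (n+3*m)).card - (C n).card : ℝ))
      linarith [this]
    rw [abs_le]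
    constructor
    · linarith [hP3, hdiff2, hsum]
    · linarith [hQ2, hdiff3, hsum]
  -- integrate the bound
  set I1 : ℝ := ∫ a, φ (a 0) ∂μ with hI1
  set I2 : ℝ := ∫ a, φ (induce B f a 0) ∂μ with hI2
  have hintsum : ∀ n : ℕ,
      ∫ a, (∑ x ∈ C n, (φ (induce B f a x) - φ (a x))) ∂μ
        = ((C n).card : ℝ) * (I2 - I1) := by
    intro n
    rw [integral_finset_sum (C n) (f := fun x a => φ (induce B f a x) - φ (a x))
      (fun x _ => ((hint2 x).sub (hint1 x)))]
    have : ∀ x ∈ C n, ∫ a, (φ (induce B f a x) - φ (a x)) ∂μ = I2 - I1 := by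
      intro x _
      rw [integral_sub (hint2 x) (hint1 x), hshift1 x, hshift2 x]
    rw [Finset.sum_congr rfl this, Finset.sum_const, nsmul_eq_mul]
  have habs : ∀ n : ℕ, ((C n).card : ℝ) * |I2 - I1|
      ≤ M * ((C (n+3*m)).card - (C n).card : ℝ) := by
    intro n
    have hb := norm_integral_le_of_norm_le_const (μ := μ)
      (f := fun a => ∑ x ∈ C n, (φ (induce B f a x) - φ (a x)))
      (C := M * ((C (n+3*m)).card - (C n).card : ℝ))
      (Filter.Eventually.of_forall fun a => by rw [Real.norm_eq_abs]; exact hbound n a)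
    rw [hintsum n, Real.norm_eq_abs, abs_mul,
      abs_of_nonneg (by positivity : (0:ℝ) ≤ ((C n).card : ℝ))] at hb
    simpa [measure_univ] using hb
  -- the upper bound sequence
  have hub : ∀ n : ℕ,
      |I2 - I1| ≤ M * (((2*(n:ℝ)+6*m+1)^D / (2*(n:ℝ)+1)^D) - 1) := by
    intro n
    have e1 : ((C n).card : ℝ) = (2*(n:ℝ)+1)^D := by
      rw [hCcard]
      push_cast
      ring_nf
    have e3 : ((C (n+3*m)).card : ℝ) = (2*(n:ℝ)+6*m+1)^D := by
      rw [hCcard]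
      push_cast
      ring_nf
    have hposn : (0:ℝ) < (2*(n:ℝ)+1)^D := by positivity
    have h := habs n
    rw [e1, e3] at h
    have h2 : |I2 - I1| ≤ M * ((2*(n:ℝ)+6*m+1)^D - (2*(n:ℝ)+1)^D) / (2*(n:ℝ)+1)^D := by
      rw [le_div_iff₀ hposn]
      calc |I2 - I1| * (2*(n:ℝ)+1)^D = (2*(n:ℝ)+1)^D * |I2 - I1| := by ring
        _ ≤ M * ((2*(n:ℝ)+6*m+1)^D - (2*(n:ℝ)+1)^D) := h
    refine le_trans h2 (le_of_eq ?_)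
    field_simp
  -- limit
  have hq : Filter.Tendsto (fun n : ℕ => M * (((2*(n:ℝ)+6*m+1)^D / (2*(n:ℝ)+1)^D) - 1))
      Filter.atTop (𝓝 0) := by
    have h2n : Filter.Tendsto (fun n : ℕ => 2*(n:ℝ)+1) Filter.atTop Filter.atTop := by
      apply Filter.tendsto_atTop_add_const_right
      exact (tendsto_natCast_atTop_atTop).const_mul_atTop two_pos
    have hfrac : Filter.Tendsto (fun n : ℕ => (6*(m:ℝ)) / (2*(n:ℝ)+1))
        Filter.atTop (𝓝 0) := Filter.Tendsto.div_atTop tendsto_const_nhds h2n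
    have hratio : Filter.Tendsto (fun n : ℕ => (2*(n:ℝ)+6*m+1) / (2*(n:ℝ)+1))
        Filter.atTop (𝓝 1) := by
      have h1 : Filter.Tendsto (fun n : ℕ => 1 + (6*(m:ℝ))/(2*(n:ℝ)+1))
          Filter.atTop (𝓝 1) := by
        have := hfrac.const_add (1:ℝ)
        simpa using this
      refine h1.congr ?_
      intro n
      have hne : (2*(n:ℝ)+1) ≠ 0 := by positivity
      field_simp
      ring
    have hpow : Filter.Tendsto (fun n : ℕ => ((2*(n:ℝ)+6*m+1) / (2*(n:ℝ)+1))^D)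
        Filter.atTop (𝓝 1) := by
      have := hratio.pow D
      simpa using this
    have := (hpow.sub_const 1).const_mul M
    simpa [div_pow] using this
  have hfinal : |I2 - I1| ≤ 0 := ge_of_tendsto' hq hub
  have : I2 - I1 = 0 := abs_eq_zero.mp (le_antisymm hfinal (abs_nonneg _))
  rw [hI1, hI2] at this
  linarith [this]

end

theorem stmt7 {A : Type*} [Fintype A] [Nonempty A]
    [MeasurableSpace A] [DiscreteMeasurableSpace A]
    {D : ℕ} (hD : 1 ≤ D)
    (B : Finset (Fin D → ℤ)) (hB0 : (0 : Fin D → ℤ) ∈ B)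
    (hBsym : ∀ b : Fin D → ℤ, b ∈ B ↔ -b ∈ B)
    (f : (B → A) → A) (φ : A → ℝ)
    (hpos : ∀ a : A, 0 ≤ φ a) (hvac : ∃ a : A, φ a = 0) :
    conserved B f φ ↔
      ∀ μ : Measure ((Fin D → ℤ) → A), IsProbabilityMeasure μ →
        (∀ x : Fin D → ℤ, Measure.map (fun a y => a (y + x)) μ = μ) →
        ∫ a, φ (a 0) ∂μ = ∫ a, φ (induce B f a 0) ∂μ := by
  constructor
  · intro hcons μ hμp hμs
    exact forward hD B f φ hpos hcons μ hμp hμs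
  · intro H
    exact ⟨hvac, fun a hfin => finprop B f φ hpos hvac H a hfin,
      fun a hfin => sumprop B f φ hpos hvac H a hfin⟩
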